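/- Let H_i, H_j : ℝ^d × ℝ → ℝ be C² with everywhere positive definite Hessian and superlinear, and let A : ℝ^d → ℝ be C² with everywhere positive definite Hessian and satisfy A(p') ≥ max(min_p H_i(p',p), min_p H_j(p',p)) for all p'. For Z = (z', z_i, z_j) ∈ 𝒬 := ℝ^d × [0,+∞) × (−∞,0], set 𝔊(Z) = sup { p'·z' + p_i z_i + p_j z_j − λ : (p',p_i,p_j,λ) with H_i(p',p_i) = H_j(p',p_j) = λ ≥ A(p') }. Then for every Z ∈ 𝒬 this supremum is attained at some (p',p_i,p_j,λ) with H_i(p',p_i) = H_j(p',p_j) = λ ≥ A(p'), and there exist α_i, α_j, α_0 ≥ 0 with α_i + α_j + α_0 = 1 such that z_i = α_i ∂_p H_i(p',p_i), z_j = α_j ∂_p H_j(p',p_j), and z' = α_i ∇_{p'} H_i(p',p_i) + α_j ∇_{p'} H_j(p',p_j) + α_0 ∇A(p'). -/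

import Mathlib

open scoped RealInnerProductSpace
open Finset

/-- Conic Farkas lemma with normalized generators. -/
lemma farkas_simplex {F : Type*} [NormedAddCommGroup F] [InnerProductSpace ℝ F]
    {n : ℕ} [NeZero n] (g : Fin n → F) (c e : F)
    (hge : ∀ k, ⟪g k, e⟫ = -1) (hce : ⟪c, e⟫ = -1)
    (hyp : ∀ v : F, (∀ k, ⟪g k, v⟫ < 0) → ⟪c, v⟫ ≤ 0) :
    ∃ l : Fin n → ℝ, (∀ k, 0 ≤ l k) ∧ (∑ k, l k = 1) ∧ c = ∑ k, l k • g k := by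
  have hne : (stdSimplex ℝ (Fin n)).Nonempty := ⟨fun _ => (n : ℝ)⁻¹, by
    constructor
    · intro k; positivity
    · rw [Finset.sum_const, Finset.card_univ, Fintype.card_fin, nsmul_eq_mul]
      exact mul_inv_cancel₀ (Nat.cast_ne_zero.mpr (NeZero.ne n))⟩
  have hcont : Continuous (fun l : Fin n → ℝ => ‖c - ∑ k, l k • g k‖ ^ 2) := by
    continuity
  obtain ⟨l, hlmem, hlmin⟩ :=
    (isCompact_stdSimplex ℝ (Fin n)).exists_isMinOn hne hcont.continuousOn
  set m : F := ∑ k, l k • g k with hm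
  set r : F := c - m with hr
  have hvar : ∀ k, ⟪r, g k - m⟫ ≤ 0 := by
    intro k
    by_contra hpos
    push_neg at hpos
    set a : ℝ := ⟪r, g k - m⟫ with hadef
    have ha : 0 < a := hpos
    set b : ℝ := ‖g k - m‖ ^ 2 with hbdef
    have hb : 0 ≤ b := by positivity
    set t : ℝ := min 1 (a / (b + 1)) with htdef
    have ht0 : 0 < t := lt_min one_pos (by positivity)
    have ht1 : t ≤ 1 := min_le_left _ _
    set p : Fin n → ℝ := (1 - t) • l + t • (fun i => if k = i then (1:ℝ) else 0) with hp
    have hpt : p ∈ stdSimplex ℝ (Fin n) :=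
      (convex_stdSimplex ℝ (Fin n)) hlmem (ite_eq_mem_stdSimplex ℝ k)
        (a := 1 - t) (b := t) (by linarith) ht0.le (by ring)
    have hsum : (∑ i, p i • g i) = m + t • (g k - m) := by
      have h1 : (∑ i, p i • g i)
          = (1 - t) • (∑ i, l i • g i) + t • (∑ i, (if k = i then (1:ℝ) else 0) • g i) := by
        rw [Finset.smul_sum, Finset.smul_sum, ← Finset.sum_add_distrib]
        refine Finset.sum_congr rfl fun i _ => ?_
        simp only [hp, Pi.add_apply, Pi.smul_apply, smul_eq_mul, add_smul, smul_smul]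
      have h2 : (∑ i, (if k = i then (1:ℝ) else 0) • g i) = g k := by
        have : ∀ i, (if k = i then (1:ℝ) else 0) • g i = if k = i then g i else 0 := by
          intro i; split <;> simp
        rw [Finset.sum_congr rfl (fun i _ => this i), Finset.sum_ite_eq Finset.univ k g]
        simp
      rw [h1, h2, ← hm]
      rw [smul_sub]
      module
    have hval := hlmin hpt
    simp only [Set.mem_setOf_eq, hsum] at hval
    -- hval : ‖c - m‖^2 ≤ ‖c - (m + t • (g k - m))‖^2
    have hexp : ‖c - (m + t • (g k - m))‖ ^ 2 = ‖r‖ ^ 2 - 2 * t * a + t ^ 2 * b := by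
      have : c - (m + t • (g k - m)) = r - t • (g k - m) := by rw [hr]; abel
      rw [this, hbdef, hadef]
      rw [norm_sub_sq_real]
      rw [real_inner_smul_right, norm_smul]
      simp [mul_pow]
      ring
    rw [hexp] at hval
    -- ‖r‖^2 ≤ ‖r‖^2 - 2 t a + t² b, so 2 a ≤ t b ≤ (a/(b+1)) b < 2a : contradiction
    have h2a : 2 * a ≤ t * b := by nlinarith
    have : t * b ≤ (a / (b + 1)) * b := by
      apply mul_le_mul_of_nonneg_right (min_le_right _ _) hb
    have : (a / (b + 1)) * b < 2 * a := by
      rw [div_mul_eq_mul_div, div_lt_iff₀ (by linarith)]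
      nlinarith
    linarith
  -- now show r = 0
  have hrzero : r = 0 := by
    by_contra hrne
    have hrr : (0:ℝ) < ‖r‖ ^ 2 := by have := norm_pos_iff.mpr hrne; positivity
    have hrm : ⟪r, c⟫ = ⟪r, m⟫ + ‖r‖ ^ 2 := by
      have : c = m + r := by rw [hr]; abel
      rw [this, inner_add_right, real_inner_self_eq_norm_sq]
    set T : ℝ := ⟪r, m⟫ + ‖r‖ ^ 2 / 2 with hT
    set v : F := r + T • e with hv
    have hgv : ∀ k, ⟪g k, v⟫ < 0 := by
      intro k
      rw [hv, inner_add_right, real_inner_smul_right, hge]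
      have h1 : ⟪g k, r⟫ ≤ ⟪r, m⟫ := by
        have := hvar k
        rw [inner_sub_right] at this
        rw [real_inner_comm]
        linarith
      rw [hT]; linarith
    have hcv := hyp v hgv
    rw [hv, inner_add_right, real_inner_smul_right, hce, real_inner_comm, hrm, hT] at hcv
    linarith
  refine ⟨l, fun k => hlmem.1 k, hlmem.2, ?_⟩
  have : c = m := by
    have := hrzero; rw [hr, sub_eq_zero] at this; exact this
  exact this

open Filter Topology

lemma eventually_neg_right {f : ℝ → ℝ} {a : ℝ} (hf : HasDerivAt f a 0) (h0 : f 0 = 0)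
    (ha : a < 0) : ∀ᶠ t in 𝓝[>] (0:ℝ), f t < 0 := by
  have htend0 : Tendsto (slope f 0) (𝓝[≠] (0:ℝ)) (𝓝 a) :=
    hasDerivAt_iff_tendsto_slope.mp hf
  have hmono : 𝓝[>] (0:ℝ) ≤ 𝓝[≠] (0:ℝ) :=
    nhdsWithin_mono 0 (fun x hx => ne_of_gt hx)
  have htend : Tendsto (slope f 0) (𝓝[>] (0:ℝ)) (𝓝 a) := htend0.mono_left hmono
  have hev : ∀ᶠ t in 𝓝[>] (0:ℝ), slope f 0 t < 0 := htend.eventually_lt_const ha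
  filter_upwards [hev, self_mem_nhdsWithin] with t h1 (h2 : 0 < t)
  rw [slope_def_field, h0, sub_zero, sub_zero] at h1
  exact (div_neg_iff.mp h1).resolve_left (fun h => absurd h2 (not_lt.mpr h.2.le)) |>.1

/-- Superlinear + continuous gives a global affine lower bound for each slope `M ≥ 0`. -/
lemma superlinear_lower_bound {E : Type*} [NormedAddCommGroup E] [NormedSpace ℝ E]
    [ProperSpace E] {H : E → ℝ} (hc : Continuous H)
    (hsup : ∀ M : ℝ, ∃ R : ℝ, ∀ P : E, R ≤ ‖P‖ → M * ‖P‖ ≤ H P)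
    (M : ℝ) (hM : 0 ≤ M) : ∃ C : ℝ, 0 ≤ C ∧ ∀ P : E, M * ‖P‖ - C ≤ H P := by
  obtain ⟨R, hR⟩ := hsup M
  set R' : ℝ := max R 0 with hR'
  have hball : IsCompact (Metric.closedBall (0:E) R') := isCompact_closedBall _ _
  have hne : (Metric.closedBall (0:E) R').Nonempty :=
    ⟨0, Metric.mem_closedBall_self (le_max_right _ _)⟩
  obtain ⟨P₀, _, hmin⟩ := hball.exists_isMinOn hne hc.continuousOn
  refine ⟨max 0 (M * R' - H P₀), le_max_left _ _, fun P => ?_⟩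
  by_cases h : R' ≤ ‖P‖
  · have := hR P (le_trans (le_max_left _ _) h)
    have : M * ‖P‖ ≤ H P := this
    have h2 : (0:ℝ) ≤ max 0 (M * R' - H P₀) := le_max_left _ _
    linarith
  · push_neg at h
    have hPmem : P ∈ Metric.closedBall (0:E) R' := by
      simpa [Metric.mem_closedBall, dist_zero_right] using h.le
    have h1 : H P₀ ≤ H P := hmin hPmem
    have h2 : M * ‖P‖ ≤ M * R' := mul_le_mul_of_nonneg_left h.le hM
    have h3 : M * R' - H P₀ ≤ max 0 (M * R' - H P₀) := le_max_right _ _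
    linarith
open scoped RealInnerProductSpace

variable {d : ℕ}
noncomputable section
abbrev E' (d : ℕ) := EuclideanSpace ℝ (Fin d)
abbrev FF (d : ℕ) := WithLp 2 ((WithLp 2 (E' d × ℝ)) × (WithLp 2 (ℝ × ℝ)))

def mkF (a : E' d) (b c m : ℝ) : FF d :=
  (WithLp.equiv 2 _).symm ((WithLp.equiv 2 _).symm (a, b), (WithLp.equiv 2 _).symm (c, m))

lemma innF (x y : E' d) (b c m b' c' m' : ℝ) :
    ⟪mkF x b c m, mkF y b' c' m'⟫ = ⟪x, y⟫ + b * b' + c * c' + m * m' := by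
  simp [mkF, WithLp.prod_inner_apply, RCLike.inner_apply]
  ring

lemma mkF_smul (t : ℝ) (a : E' d) (b c m : ℝ) : t • mkF a b c m = mkF (t • a) (t*b) (t*c) (t*m) := by
  simp only [mkF, WithLp.equiv_symm_apply, ← WithLp.toLp_smul, Prod.smul_mk, smul_eq_mul]

lemma mkF_add (a a' : E' d) (b c m b' c' m' : ℝ) :
    mkF a b c m + mkF a' b' c' m' = mkF (a + a') (b+b') (c+c') (m+m') := by
  simp only [mkF, WithLp.equiv_symm_apply, ← WithLp.toLp_add, Prod.mk_add_mk]

lemma mkF_inj {a a' : E' d} {b c m b' c' m' : ℝ} (h : mkF a b c m = mkF a' b' c' m') :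
    a = a' ∧ b = b' ∧ c = c' ∧ m = m' := by
  simp only [mkF] at h
  have h1 := (WithLp.equiv 2 _).symm.injective h
  have h2 := congrArg Prod.fst h1
  have h3 := congrArg Prod.snd h1
  have h4 := (WithLp.equiv 2 _).symm.injective h2
  have h5 := (WithLp.equiv 2 _).symm.injective h3
  exact ⟨congrArg Prod.fst h4, congrArg Prod.snd h4, congrArg Prod.fst h5, congrArg Prod.snd h5⟩
end

section calcul
variable {f : E' d × ℝ → ℝ}

lemma grad_char (hf : Differentiable ℝ f) (p' : E' d) (b : ℝ) (w : E' d) :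
    ⟪gradient (fun q => f (q, b)) p', w⟫ = fderiv ℝ f (p', b) (w, 0) := by
  have h1 : HasFDerivAt (fun q : E' d => f (q, b))
      ((fderiv ℝ f (p', b)).comp ((ContinuousLinearMap.id ℝ (E' d)).prod 0)) p' :=
    (hf (p', b)).hasFDerivAt.comp p' ((hasFDerivAt_id p').prodMk (hasFDerivAt_const b p'))
  have h3 := h1.differentiableAt.hasGradientAt
  have h4 := hasGradientAt_iff_hasFDerivAt.mp h3
  have h5 := h4.unique h1
  have := congrArg (fun (L : E' d →L[ℝ] ℝ) => L w) h5
  simpa [InnerProductSpace.toDual_apply_apply] using this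

lemma grad_charA {g : E' d → ℝ} (hg : Differentiable ℝ g) (p' : E' d) (w : E' d) :
    ⟪gradient g p', w⟫ = fderiv ℝ g p' w := by
  have h3 := (hg p').hasGradientAt
  have h4 := hasGradientAt_iff_hasFDerivAt.mp h3
  have h5 := h4.unique (hg p').hasFDerivAt
  have := congrArg (fun (L : E' d →L[ℝ] ℝ) => L w) h5
  simpa [InnerProductSpace.toDual_apply_apply] using this

lemma deriv_char (hf : Differentiable ℝ f) (p' : E' d) (b : ℝ) :
    deriv (fun p : ℝ => f (p', p)) b = fderiv ℝ f (p', b) (0, 1) := by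
  have h : HasDerivAt (fun p : ℝ => f (p', p)) (fderiv ℝ f (p', b) ((0 : E' d), (1:ℝ))) b :=
    ((hf (p', b)).hasFDerivAt).comp_hasDerivAt b ((hasDerivAt_const b p').prodMk (hasDerivAt_id b))
  exact h.deriv

lemma curve_deriv (hf : Differentiable ℝ f) (x : E' d) (a : ℝ) (w : E' d) (u : ℝ) :
    HasDerivAt (fun t : ℝ => f (x + t • w, a + t * u)) (fderiv ℝ f (x, a) (w, u)) 0 := by
  have h1 : HasDerivAt (fun t : ℝ => x + t • w) w 0 := by
    simpa using ((hasDerivAt_id (0:ℝ)).smul_const w).const_add x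
  have h2 : HasDerivAt (fun t : ℝ => a + t * u) u 0 := by
    simpa using ((hasDerivAt_id (0:ℝ)).mul_const u).const_add a
  have h3 := h1.prodMk h2
  have h4 : HasFDerivAt f (fderiv ℝ f (x, a))
      ((fun t : ℝ => ((x + t • w, a + t * u) : E' d × ℝ)) 0) := by
    simpa using (hf (x, a)).hasFDerivAt
  exact h4.comp_hasDerivAt 0 h3

lemma fderiv_split (x : E' d) (a : ℝ) (w : E' d) (u : ℝ) :
    fderiv ℝ f (x, a) (w, u) = fderiv ℝ f (x, a) (w, 0) + fderiv ℝ f (x, a) (0, 1) * u := by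
  have h1 : ((w, u) : E' d × ℝ) = (w, 0) + u • ((0 : E' d), (1:ℝ)) := by
    simp [Prod.ext_iff]
  rw [h1, map_add, map_smul]
  simp [mul_comm]
end calcul

lemma curve_derivA {g : E' d → ℝ} (hg : Differentiable ℝ g) (x w : E' d) :
    HasDerivAt (fun t : ℝ => g (x + t • w)) (fderiv ℝ g x w) 0 := by
  have h1 : HasDerivAt (fun t : ℝ => x + t • w) w 0 := by
    simpa using ((hasDerivAt_id (0:ℝ)).smul_const w).const_add x
  have h4 : HasFDerivAt g (fderiv ℝ g x) ((fun t : ℝ => x + t • w) 0) := by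
    simpa using (hg x).hasFDerivAt
  exact h4.comp_hasDerivAt 0 h1

lemma mkF_repr (vv : FF d) : ∃ (w : E' d) (u v m : ℝ), vv = mkF w u v m :=
  ⟨((WithLp.equiv 2 _) ((WithLp.equiv 2 _) vv).1).1,
   ((WithLp.equiv 2 _) ((WithLp.equiv 2 _) vv).1).2,
   ((WithLp.equiv 2 _) ((WithLp.equiv 2 _) vv).2).1,
   ((WithLp.equiv 2 _) ((WithLp.equiv 2 _) vv).2).2, by simp [mkF]; rfl⟩

open Filter Topology

set_option maxHeartbeats 2000000 in
/-- Necessary conditions for the maximiser, ij-version: for smooth uniformly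
convex superlinear `Hi, Hj` and a smooth uniformly convex limiter `A ≥ max(min Hi, min Hj)`,
for every `Z = (z', z_i, z_j)` with `z_i ≥ 0 ≥ z_j` the supremum defining `𝔊 Z` is attained
at some feasible `(p', p_i, p_j, λ)` admitting multipliers `(α_i, α_j, α_0)` in the simplex
with `z_i = α_i ∂_p Hi`, `z_j = α_j ∂_p Hj`, `z' = α_i ∇_{p'}Hi + α_j ∇_{p'}Hj + α_0 ∇A`. -/
theorem vertex_sup_attained_with_multipliers (d : ℕ)
    (Hi Hj : EuclideanSpace ℝ (Fin d) × ℝ → ℝ)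
    (hC2i : ContDiff ℝ 2 Hi) (hC2j : ContDiff ℝ 2 Hj)
    (hposi : ∀ P v : EuclideanSpace ℝ (Fin d) × ℝ, v ≠ 0 →
      0 < iteratedFDeriv ℝ 2 Hi P ![v, v])
    (hposj : ∀ P v : EuclideanSpace ℝ (Fin d) × ℝ, v ≠ 0 →
      0 < iteratedFDeriv ℝ 2 Hj P ![v, v])
    (hsupi : ∀ M : ℝ, ∃ R : ℝ, ∀ P : EuclideanSpace ℝ (Fin d) × ℝ, R ≤ ‖P‖ → M * ‖P‖ ≤ Hi P)
    (hsupj : ∀ M : ℝ, ∃ R : ℝ, ∀ P : EuclideanSpace ℝ (Fin d) × ℝ, R ≤ ‖P‖ → M * ‖P‖ ≤ Hj P)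
    (A : EuclideanSpace ℝ (Fin d) → ℝ)
    (hAC2 : ContDiff ℝ 2 A)
    (hApos : ∀ p' v : EuclideanSpace ℝ (Fin d), v ≠ 0 →
      0 < iteratedFDeriv ℝ 2 A p' ![v, v])
    (hAbound : ∀ p' : EuclideanSpace ℝ (Fin d),
      (⨅ p : ℝ, Hi (p', p)) ≤ A p' ∧ (⨅ p : ℝ, Hj (p', p)) ≤ A p')
    (z' : EuclideanSpace ℝ (Fin d)) (zi zj : ℝ) (hzi : 0 ≤ zi) (hzj : zj ≤ 0) :
    ∃ (p' : EuclideanSpace ℝ (Fin d)) (pi pj lam : ℝ),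
      Hi (p', pi) = lam ∧ Hj (p', pj) = lam ∧ A p' ≤ lam ∧
      IsGreatest {v : ℝ | ∃ (q' : EuclideanSpace ℝ (Fin d)) (qi qj mu : ℝ),
          Hi (q', qi) = mu ∧ Hj (q', qj) = mu ∧ A q' ≤ mu ∧
          v = ⟪q', z'⟫ + qi * zi + qj * zj - mu}
        (⟪p', z'⟫ + pi * zi + pj * zj - lam) ∧
      ∃ ai aj a0 : ℝ, 0 ≤ ai ∧ 0 ≤ aj ∧ 0 ≤ a0 ∧ ai + aj + a0 = 1 ∧
        zi = ai * deriv (fun p : ℝ => Hi (p', p)) pi ∧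
        zj = aj * deriv (fun p : ℝ => Hj (p', p)) pj ∧
        z' = ai • gradient (fun q : EuclideanSpace ℝ (Fin d) => Hi (q, pi)) p'
           + aj • gradient (fun q : EuclideanSpace ℝ (Fin d) => Hj (q, pj)) p'
           + a0 • gradient A p' := by
  classical
  -- the ambient space
  set ℓ : EuclideanSpace ℝ (Fin d) × ℝ × ℝ × ℝ → ℝ := fun X => ⟪X.1, z'⟫ + X.2.1 * zi + X.2.2.1 * zj - X.2.2.2
    with hℓdef
  set ES : Set (EuclideanSpace ℝ (Fin d) × ℝ × ℝ × ℝ) := {X | Hi (X.1, X.2.1) ≤ X.2.2.2 ∧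
      Hj (X.1, X.2.2.1) ≤ X.2.2.2 ∧ A X.1 ≤ X.2.2.2} with hESdef
  have hiC : Continuous Hi := hC2i.continuous
  have hjC : Continuous Hj := hC2j.continuous
  have hAC : Continuous A := hAC2.continuous
  have hℓcont : Continuous ℓ := by
    apply Continuous.sub
    · apply Continuous.add
      · apply Continuous.add
        · exact (continuous_fst.inner continuous_const)
        · exact (continuous_fst.comp continuous_snd).mul continuous_const
      · exact ((continuous_fst.comp (continuous_snd.comp continuous_snd))).mul continuous_const
    · exact continuous_snd.comp (continuous_snd.comp continuous_snd)
  have hES_closed : IsClosed ES := by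
    apply IsClosed.inter
    · exact isClosed_le (hiC.comp (continuous_fst.prodMk (continuous_fst.comp continuous_snd)))
        (continuous_snd.comp (continuous_snd.comp continuous_snd))
    apply IsClosed.inter
    · exact isClosed_le (hjC.comp (continuous_fst.prodMk
        (continuous_fst.comp (continuous_snd.comp continuous_snd))))
        (continuous_snd.comp (continuous_snd.comp continuous_snd))
    · exact isClosed_le (hAC.comp continuous_fst)
        (continuous_snd.comp (continuous_snd.comp continuous_snd))
  -- there is a maximizer of ℓ on ES
  have hmaxex : ∃ X ∈ ES, ∀ Y ∈ ES, ℓ Y ≤ ℓ X := by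
    obtain ⟨K, hK⟩ : ∃ K : ℝ, K = ‖z'‖ + |zi| + |zj| := ⟨_, rfl⟩
    have hK0 : 0 ≤ K := by rw [hK]; positivity
    obtain ⟨Ci, hCi0, hCi⟩ := superlinear_lower_bound hiC hsupi (4*K+4) (by linarith)
    obtain ⟨Cj, hCj0, hCj⟩ := superlinear_lower_bound hjC hsupj (4*K+4) (by linarith)
    obtain ⟨C, hC⟩ : ∃ C : ℝ, C = max Ci Cj := ⟨_, rfl⟩
    have hC0 : 0 ≤ C := hC ▸ le_trans hCi0 (le_max_left _ _)
    have key : ∀ X ∈ ES, ℓ X ≤ C - (‖X.1‖ + |X.2.1| + |X.2.2.1|) := by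
      rintro ⟨q', qi, qj, mu⟩ ⟨h1, h2, h3⟩
      simp only at h1 h2 h3 ⊢
      have hi' := hCi (q', qi)
      have hj' := hCj (q', qj)
      have hni : (‖q'‖ + |qi|)/2 ≤ ‖((q', qi) : EuclideanSpace ℝ (Fin d) × ℝ)‖ := by
        rw [Prod.norm_def]
        simp only [Real.norm_eq_abs]
        have := le_max_left ‖q'‖ |qi|
        have := le_max_right ‖q'‖ |qi|
        linarith
      have hnj : (‖q'‖ + |qj|)/2 ≤ ‖((q', qj) : EuclideanSpace ℝ (Fin d) × ℝ)‖ := by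
        rw [Prod.norm_def]
        simp only [Real.norm_eq_abs]
        have := le_max_left ‖q'‖ |qj|
        have := le_max_right ‖q'‖ |qj|
        linarith
      have hmui : (4*K+4) * ((‖q'‖ + |qi|)/2) - C ≤ mu := by
        have := mul_le_mul_of_nonneg_left hni (by linarith : (0:ℝ) ≤ 4*K+4)
        have hCiC : Ci ≤ C := hC ▸ le_max_left _ _
        linarith
      have hmuj : (4*K+4) * ((‖q'‖ + |qj|)/2) - C ≤ mu := by
        have := mul_le_mul_of_nonneg_left hnj (by linarith : (0:ℝ) ≤ 4*K+4)
        have hCjC : Cj ≤ C := hC ▸ le_max_right _ _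
        linarith
      have hip : ⟪q', z'⟫ ≤ ‖q'‖ * ‖z'‖ := real_inner_le_norm q' z'
      have hqi : qi * zi ≤ |qi| * |zi| := by
        calc qi * zi ≤ |qi * zi| := le_abs_self _
        _ = |qi| * |zi| := abs_mul _ _
      have hqj : qj * zj ≤ |qj| * |zj| := by
        calc qj * zj ≤ |qj * zj| := le_abs_self _
        _ = |qj| * |zj| := abs_mul _ _
      simp only [hℓdef]
      have h0q : (0:ℝ) ≤ ‖q'‖ := norm_nonneg _
      have h0i : (0:ℝ) ≤ |qi| := abs_nonneg _
      have h0j : (0:ℝ) ≤ |qj| := abs_nonneg _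
      have h0z : (0:ℝ) ≤ ‖z'‖ := norm_nonneg _
      have h0zi : (0:ℝ) ≤ |zi| := abs_nonneg _
      have h0zj : (0:ℝ) ≤ |zj| := abs_nonneg _
      nlinarith [mul_nonneg h0q h0zi, mul_nonneg h0q h0zj, mul_nonneg h0i h0z,
        mul_nonneg h0i h0zj, mul_nonneg h0j h0z, mul_nonneg h0j h0zi,
        mul_nonneg h0q h0z, mul_nonneg h0i h0zi, mul_nonneg h0j h0zj]
    -- a base point
    set mu0 : ℝ := max (A 0) (max (Hi (0,0)) (Hj (0,0))) with hmu0
    set X0 : EuclideanSpace ℝ (Fin d) × ℝ × ℝ × ℝ := (0, 0, 0, mu0) with hX0def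
    have hX0 : X0 ∈ ES := by
      refine ⟨?_, ?_, ?_⟩
      · exact le_trans (le_max_left _ _) (le_max_right _ _)
      · exact le_trans (le_max_right _ _) (le_max_right _ _)
      · exact le_max_left _ _
    set L0 : ℝ := ℓ X0 with hL0
    set B : ℝ := C - L0 with hB
    have hSB : ∀ X ∈ ES, L0 ≤ ℓ X → ‖X.1‖ + |X.2.1| + |X.2.2.1| ≤ B := by
      intro X hX hLX
      have := key X hX
      simp only [hB]
      linarith
    have hB0 : 0 ≤ B := by
      have := hSB X0 hX0 le_rfl
      have h0q : (0:ℝ) ≤ ‖X0.1‖ := norm_nonneg _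
      have h0i : (0:ℝ) ≤ |X0.2.1| := abs_nonneg _
      have h0j : (0:ℝ) ≤ |X0.2.2.1| := abs_nonneg _
      linarith
    set R : ℝ := max B (max C (K * B - L0)) with hRdef
    have hsub : ES ∩ {X | L0 ≤ ℓ X} ⊆ Metric.closedBall 0 R := by
      rintro ⟨q', qi, qj, mu⟩ ⟨hX, hLX⟩
      have hS := hSB _ hX hLX
      simp only at hS
      have h0q : (0:ℝ) ≤ ‖q'‖ := norm_nonneg _
      have h0i : (0:ℝ) ≤ |qi| := abs_nonneg _
      have h0j : (0:ℝ) ≤ |qj| := abs_nonneg _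
      -- bounds on mu
      have hmulow : -C ≤ mu := by
        have h1 := hX.1
        have := hCi (q', qi)
        simp only at h1
        have h2 : (0:ℝ) ≤ (4*K+4) * ‖((q', qi) : EuclideanSpace ℝ (Fin d) × ℝ)‖ := by
          have : (0:ℝ) ≤ ‖((q', qi) : EuclideanSpace ℝ (Fin d) × ℝ)‖ := norm_nonneg _
          nlinarith
        have hCiC : Ci ≤ C := hC ▸ le_max_left _ _
        linarith
      have hmuhigh : mu ≤ K * B - L0 := by
        have hip : ⟪q', z'⟫ ≤ ‖q'‖ * ‖z'‖ := real_inner_le_norm q' z'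
        have hqi : qi * zi ≤ |qi| * |zi| := by
          calc qi * zi ≤ |qi * zi| := le_abs_self _
          _ = |qi| * |zi| := abs_mul _ _
        have hqj : qj * zj ≤ |qj| * |zj| := by
          calc qj * zj ≤ |qj * zj| := le_abs_self _
          _ = |qj| * |zj| := abs_mul _ _
        have hLX' : L0 ≤ ⟪q', z'⟫ + qi * zi + qj * zj - mu := hLX
        have h0z : (0:ℝ) ≤ ‖z'‖ := norm_nonneg _
        have h0zi : (0:ℝ) ≤ |zi| := abs_nonneg _
        have h0zj : (0:ℝ) ≤ |zj| := abs_nonneg _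
        nlinarith [mul_nonneg h0q h0zi, mul_nonneg h0q h0zj, mul_nonneg h0i h0z,
          mul_nonneg h0i h0zj, mul_nonneg h0j h0z, mul_nonneg h0j h0zi]
      have hmuabs : |mu| ≤ R := by
        rw [abs_le]
        constructor
        · have : C ≤ R := le_trans (le_max_left _ _) (le_max_right _ _)
          linarith
        · exact le_trans hmuhigh (le_trans (le_max_right _ _) (le_max_right _ _))
      have hBR : B ≤ R := le_max_left _ _
      rw [Metric.mem_closedBall, dist_zero_right]
      rw [Prod.norm_def, Prod.norm_def, Prod.norm_def]
      simp only [Real.norm_eq_abs]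
      refine max_le (by linarith) (max_le (by linarith) (max_le (by linarith) hmuabs))
    have hKcl : IsClosed (ES ∩ {X | L0 ≤ ℓ X}) :=
      hES_closed.inter (isClosed_le continuous_const hℓcont)
    have hKcomp : IsCompact (ES ∩ {X | L0 ≤ ℓ X}) :=
      (isCompact_closedBall (0 : EuclideanSpace ℝ (Fin d) × ℝ × ℝ × ℝ) R).of_isClosed_subset
        hKcl hsub
    obtain ⟨X1, hX1mem, hX1max⟩ := hKcomp.exists_isMaxOn ⟨X0, hX0, show L0 ≤ ℓ X0 from le_rfl⟩
      hℓcont.continuousOn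
    refine ⟨X1, hX1mem.1, fun Y hY => ?_⟩
    by_cases hcase : L0 ≤ ℓ Y
    · exact hX1max ⟨hY, hcase⟩
    · push_neg at hcase
      exact le_trans hcase.le (hX1max ⟨hX0, show L0 ≤ ℓ X0 from le_rfl⟩)
  obtain ⟨X1, hX1mem, hX1max⟩ := hmaxex
  -- move to the boundary
  have hbdry : ∃ pi pj : ℝ, X1.2.1 ≤ pi ∧ pj ≤ X1.2.2.1 ∧
      Hi (X1.1, pi) = X1.2.2.2 ∧ Hj (X1.1, pj) = X1.2.2.2 := by
    obtain ⟨C1, hC10, hC1⟩ := superlinear_lower_bound hiC hsupi 1 zero_le_one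
    obtain ⟨C2, hC20, hC2⟩ := superlinear_lower_bound hjC hsupj 1 zero_le_one
    have hroot_i : ∀ (q' : EuclideanSpace ℝ (Fin d)) (qi mu : ℝ), Hi (q', qi) ≤ mu →
        ∃ pi, qi ≤ pi ∧ Hi (q', pi) = mu := by
      intro q' qi mu hle
      have hT : qi ≤ max qi (mu + C1) := le_max_left _ _
      have hcont : ContinuousOn (fun t => Hi (q', t)) (Set.Icc qi (max qi (mu + C1))) :=
        (hiC.comp (Continuous.prodMk_right q')).continuousOn
      have hup : mu ≤ Hi (q', max qi (mu + C1)) := by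
        have h1 := hC1 (q', max qi (mu + C1))
        have h2 : |max qi (mu + C1)| ≤ ‖((q', max qi (mu + C1)) :
            EuclideanSpace ℝ (Fin d) × ℝ)‖ := by
          have := norm_snd_le ((q', max qi (mu + C1)) : EuclideanSpace ℝ (Fin d) × ℝ)
          simpa [Real.norm_eq_abs] using this
        have h3 : mu + C1 ≤ max qi (mu + C1) := le_max_right _ _
        have h4 : max qi (mu + C1) ≤ |max qi (mu + C1)| := le_abs_self _
        linarith
      have := intermediate_value_Icc hT hcont
      obtain ⟨pi, hpimem, hpival⟩ := this ⟨hle, hup⟩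
      exact ⟨pi, hpimem.1, hpival⟩
    have hroot_j : ∀ (q' : EuclideanSpace ℝ (Fin d)) (qj mu : ℝ), Hj (q', qj) ≤ mu →
        ∃ pj, pj ≤ qj ∧ Hj (q', pj) = mu := by
      intro q' qj mu hle
      have hT : min qj (-(mu + C2)) ≤ qj := min_le_left _ _
      have hcont : ContinuousOn (fun t => Hj (q', t)) (Set.Icc (min qj (-(mu + C2))) qj) :=
        (hjC.comp (Continuous.prodMk_right q')).continuousOn
      have hup : mu ≤ Hj (q', min qj (-(mu + C2))) := by
        have h1 := hC2 (q', min qj (-(mu + C2)))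
        have h2 : |min qj (-(mu + C2))| ≤ ‖((q', min qj (-(mu + C2))) :
            EuclideanSpace ℝ (Fin d) × ℝ)‖ := by
          have := norm_snd_le ((q', min qj (-(mu + C2))) : EuclideanSpace ℝ (Fin d) × ℝ)
          simpa [Real.norm_eq_abs] using this
        have h3 : min qj (-(mu + C2)) ≤ -(mu + C2) := min_le_right _ _
        have h4 : -(min qj (-(mu + C2))) ≤ |min qj (-(mu + C2))| := neg_le_abs _
        linarith
      have := intermediate_value_Icc' hT hcont
      obtain ⟨pj, hpjmem, hpjval⟩ := this ⟨hle, hup⟩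
      exact ⟨pj, hpjmem.2, hpjval⟩
    obtain ⟨pi, hpi, hpival⟩ := hroot_i X1.1 X1.2.1 X1.2.2.2 hX1mem.1
    obtain ⟨pj, hpj, hpjval⟩ := hroot_j X1.1 X1.2.2.1 X1.2.2.2 hX1mem.2.1
    exact ⟨pi, pj, hpi, hpj, hpival, hpjval⟩
  obtain ⟨pi, pj, hpi1, hpj1, hHipi, hHjpj⟩ := hbdry
  set p' : EuclideanSpace ℝ (Fin d) := X1.1
  set lam : ℝ := X1.2.2.2
  set Xs : EuclideanSpace ℝ (Fin d) × ℝ × ℝ × ℝ := (p', pi, pj, lam) with hXs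
  have hXsmem : Xs ∈ ES := ⟨le_of_eq hHipi, le_of_eq hHjpj, hX1mem.2.2⟩
  have hXsmax : ∀ Y ∈ ES, ℓ Y ≤ ℓ Xs := by
    intro Y hY
    have h1 : ℓ X1 ≤ ℓ Xs := by
      simp only [hℓdef, hXs]
      have hzi' : X1.2.1 * zi ≤ pi * zi := mul_le_mul_of_nonneg_right hpi1 hzi
      have hzj' : X1.2.2.1 * zj ≤ pj * zj := by nlinarith
      simp only [p', lam]
      linarith
    exact le_trans (hX1max Y hY) h1
-- final multiplier section
  -- differentiability
  have hdiffi : Differentiable ℝ Hi := hC2i.differentiable (by norm_num)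
  have hdiffj : Differentiable ℝ Hj := hC2j.differentiable (by norm_num)
  have hdiffA : Differentiable ℝ A := hAC2.differentiable (by norm_num)
  obtain ⟨Gi', hGi'⟩ : ∃ g, g = gradient (fun q => Hi (q, pi)) p' := ⟨_, rfl⟩
  obtain ⟨Gj', hGj'⟩ : ∃ g, g = gradient (fun q => Hj (q, pj)) p' := ⟨_, rfl⟩
  obtain ⟨GA, hGA⟩ : ∃ g, g = gradient A p' := ⟨_, rfl⟩
  obtain ⟨hi, hhi⟩ : ∃ h : ℝ, h = deriv (fun p : ℝ => Hi (p', p)) pi := ⟨_, rfl⟩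
  obtain ⟨hj, hhj⟩ : ∃ h : ℝ, h = deriv (fun p : ℝ => Hj (p', p)) pj := ⟨_, rfl⟩
  have hIi : ∀ (w : EuclideanSpace ℝ (Fin d)) (u : ℝ),
      ⟪Gi', w⟫ + hi * u = fderiv ℝ Hi (p', pi) (w, u) := by
    intro w u
    rw [hGi', hhi, grad_char hdiffi, deriv_char hdiffi, fderiv_split p' pi w u]
  have hIj : ∀ (w : EuclideanSpace ℝ (Fin d)) (u : ℝ),
      ⟪Gj', w⟫ + hj * u = fderiv ℝ Hj (p', pj) (w, u) := by
    intro w u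
    rw [hGj', hhj, grad_char hdiffj, deriv_char hdiffj, fderiv_split p' pj w u]
  have hIA : ∀ (w : EuclideanSpace ℝ (Fin d)), ⟪GA, w⟫ = fderiv ℝ A p' w := by
    intro w; rw [hGA, grad_charA hdiffA]
  have hAle : A p' ≤ lam := hX1mem.2.2
  -- key perturbation inequality
  have key : ∀ (w : EuclideanSpace ℝ (Fin d)) (u v m : ℝ),
      fderiv ℝ Hi (p', pi) (w, u) < m →
      fderiv ℝ Hj (p', pj) (w, v) < m →
      (A p' = lam → fderiv ℝ A p' w < m) →
      ⟪z', w⟫ + zi * u + zj * v ≤ m := by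
    intro w u v m h1 h2 h3
    have hline : HasDerivAt (fun t : ℝ => lam + t * m) m 0 := by
      simpa using ((hasDerivAt_id (0:ℝ)).mul_const m).const_add lam
    have e1 : ∀ᶠ t in 𝓝[>] (0:ℝ), Hi (p' + t • w, pi + t * u) - (lam + t * m) < 0 := by
      apply eventually_neg_right ((curve_deriv hdiffi p' pi w u).sub hline)
      · simp [hHipi]
      · linarith
    have e2 : ∀ᶠ t in 𝓝[>] (0:ℝ), Hj (p' + t • w, pj + t * v) - (lam + t * m) < 0 := by
      apply eventually_neg_right ((curve_deriv hdiffj p' pj w v).sub hline)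
      · simp [hHjpj]
      · linarith
    have e3 : ∀ᶠ t in 𝓝[>] (0:ℝ), A (p' + t • w) - (lam + t * m) < 0 := by
      rcases eq_or_lt_of_le hAle with heq | hlt
      · apply eventually_neg_right ((curve_derivA hdiffA p' w).sub hline)
        · simp [heq]
        · linarith [h3 heq]
      · have hcont : ContinuousAt (fun t : ℝ => A (p' + t • w) - (lam + t * m)) 0 := by
          apply ContinuousAt.sub
          · exact (hAC.comp (by continuity : Continuous (fun t : ℝ => p' + t • w))).continuousAt
          · exact (continuous_const.add (continuous_id.mul continuous_const)).continuousAt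
        have h0 : (fun t : ℝ => A (p' + t • w) - (lam + t * m)) 0 < 0 := by
          simp; linarith
        have hev := hcont.tendsto.eventually_lt_const h0
        exact hev.filter_mono nhdsWithin_le_nhds
    obtain ⟨t, ⟨f1, f2, f3⟩, (ht0 : (0:ℝ) < t)⟩ :=
      (((e1.and (e2.and e3)).and self_mem_nhdsWithin)).exists
    obtain ⟨f1, f2, f3⟩ := (⟨f1, f2, f3⟩ : _ ∧ _ ∧ _)
    have hYmem : ((p' + t • w, pi + t * u, pj + t * v, lam + t * m) :
        EuclideanSpace ℝ (Fin d) × ℝ × ℝ × ℝ) ∈ ES := by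
      refine ⟨?_, ?_, ?_⟩ <;> simp only <;> linarith
    have hle := hXsmax _ hYmem
    simp only [hℓdef, hXs] at hle
    rw [inner_add_left, real_inner_smul_left] at hle
    have hineq : t * (⟪w, z'⟫ + u * zi + v * zj - m) ≤ 0 := by nlinarith [hle]
    have hx : ⟪w, z'⟫ + u * zi + v * zj - m ≤ 0 := by
      by_contra hq
      push_neg at hq
      nlinarith
    rw [real_inner_comm] at hx
    linarith
  -- the IsGreatest statement
  have hgreat : IsGreatest {v : ℝ | ∃ (q' : EuclideanSpace ℝ (Fin d)) (qi qj mu : ℝ),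
      Hi (q', qi) = mu ∧ Hj (q', qj) = mu ∧ A q' ≤ mu ∧
      v = ⟪q', z'⟫ + qi * zi + qj * zj - mu}
      (⟪p', z'⟫ + pi * zi + pj * zj - lam) := by
    constructor
    · exact ⟨p', pi, pj, lam, hHipi, hHjpj, hAle, rfl⟩
    · rintro v ⟨q', qi, qj, mu, h1, h2, h3, rfl⟩
      have := hXsmax (q', qi, qj, mu) ⟨le_of_eq h1, le_of_eq h2, h3⟩
      simpa [hℓdef, hXs] using this
  by_cases hact : A p' = lam
  · -- active case : three generators
    have hfk := farkas_simplex (n := 3)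
      (fun k => mkF (![Gi', Gj', GA] k) (![hi, 0, 0] k) (![0, hj, 0] k) (-1))
      (mkF z' zi zj (-1)) (mkF 0 0 0 1)
      (by intro k; rw [innF]; simp)
      (by rw [innF]; simp)
      (by
        intro vv hk
        obtain ⟨w, u, v, m, rfl⟩ := mkF_repr vv
        have k0 := hk 0
        have k1 := hk 1
        have k2 := hk 2
        simp only [Matrix.cons_val_zero, Matrix.cons_val_one, Matrix.head_cons,
          Matrix.cons_val_two, Matrix.tail_cons, Matrix.head_fin_const] at k0 k1 k2
        rw [innF] at k0 k1 k2
        rw [innF]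
        have i1 := hIi w u
        have i2 := hIj w v
        have i3 := hIA w
        have hk1 : fderiv ℝ Hi (p', pi) (w, u) < m := by linarith
        have hk2 : fderiv ℝ Hj (p', pj) (w, v) < m := by linarith
        have hk3 : A p' = lam → fderiv ℝ A p' w < m := fun _ => by linarith
        have := key w u v m hk1 hk2 hk3
        linarith)
    obtain ⟨l, hl0, hlsum, hlc⟩ := hfk
    rw [Fin.sum_univ_three] at hlsum hlc
    simp only [Matrix.cons_val_zero, Matrix.cons_val_one, Matrix.head_cons,
      Matrix.cons_val_two, Matrix.tail_cons] at hlc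
    rw [mkF_smul, mkF_smul, mkF_smul, mkF_add, mkF_add] at hlc
    obtain ⟨hz', hzi', hzj', _⟩ := mkF_inj hlc
    refine ⟨p', pi, pj, lam, hHipi, hHjpj, hAle, hgreat, l 0, l 1, l 2,
      hl0 0, hl0 1, hl0 2, hlsum, ?_, ?_, ?_⟩
    · rw [← hhi]; rw [hzi']; ring
    · rw [← hhj]; rw [hzj']; ring
    · rw [← hGi', ← hGj', ← hGA, hz']
  · -- inactive case : two generators
    have hfk := farkas_simplex (n := 2)
      (fun k => mkF (![Gi', Gj'] k) (![hi, 0] k) (![0, hj] k) (-1))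
      (mkF z' zi zj (-1)) (mkF 0 0 0 1)
      (by intro k; rw [innF]; simp)
      (by rw [innF]; simp)
      (by
        intro vv hk
        obtain ⟨w, u, v, m, rfl⟩ := mkF_repr vv
        have k0 := hk 0
        have k1 := hk 1
        simp only [Matrix.cons_val_zero, Matrix.cons_val_one, Matrix.head_cons] at k0 k1
        rw [innF] at k0 k1
        rw [innF]
        have i1 := hIi w u
        have i2 := hIj w v
        have hk1 : fderiv ℝ Hi (p', pi) (w, u) < m := by linarith
        have hk2 : fderiv ℝ Hj (p', pj) (w, v) < m := by linarith
        have hk3 : A p' = lam → fderiv ℝ A p' w < m := fun h => absurd h hact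
        have := key w u v m hk1 hk2 hk3
        linarith)
    obtain ⟨l, hl0, hlsum, hlc⟩ := hfk
    rw [Fin.sum_univ_two] at hlsum hlc
    simp only [Matrix.cons_val_zero, Matrix.cons_val_one, Matrix.head_cons] at hlc
    rw [mkF_smul, mkF_smul, mkF_add] at hlc
    obtain ⟨hz', hzi', hzj', _⟩ := mkF_inj hlc
    refine ⟨p', pi, pj, lam, hHipi, hHjpj, hAle, hgreat, l 0, l 1, 0,
      hl0 0, hl0 1, le_refl 0, by linarith, ?_, ?_, ?_⟩
    · rw [← hhi]; rw [hzi']; ring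
    · rw [← hhj]; rw [hzj']; ring
    · rw [← hGi', ← hGj', ← hGA, hz', zero_smul, add_zero]
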